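/- Let G_K : [0,1]^K → ℝ^d be measurable and bounded with sup_{x ∈ [0,1]^K} ‖G_K(x)‖_Γ ≤ B. Then there exists a finite constant C, depending only on B, d and Γ, such that for every M ∈ ℕ with M > 0 and every choice of points x₁,…,x_M ∈ [0,1]^K, the Gaussian mixture density π_M(y) = (1/M)∑_{m=1}^M (2π)^{-d/2} det(Γ)^{-1/2} exp(-½‖G_K(x_m)-y‖_Γ²) satisfies ∫_{ℝ^d} π_M(y) log²π_M(y) dy ≤ C. In particular the bound is independent of M and of the chosen points, hence holds uniformly over any (random or deterministic) cubature node set in [0,1]^K. -/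

import Mathlib

open MeasureTheory Real Matrix

/-- `‖z‖_Γ² = zᵀ Γ⁻¹ z` for `z ∈ ℝ^d`. -/
noncomputable def normGammaSq {d : ℕ} (Γ : Matrix (Fin d) (Fin d) ℝ) (z : Fin d → ℝ) : ℝ :=
  z ⬝ᵥ (Γ⁻¹ *ᵥ z)

/-- `‖z‖_Γ = sqrt(zᵀ Γ⁻¹ z)`. -/
noncomputable def normGamma {d : ℕ} (Γ : Matrix (Fin d) (Fin d) ℝ) (z : Fin d → ℝ) : ℝ :=
  Real.sqrt (normGammaSq Γ z)

/-- Type synonym for `Fin d → ℝ`, carrying no instances, used to install the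
norm induced by a positive definite matrix. -/
def GMMESyn (d : ℕ) : Type := Fin d → ℝ

/-- Basic facts about the quadratic form of a positive definite matrix. -/
lemma gmm_qfacts {d : ℕ} {A : Matrix (Fin d) (Fin d) ℝ} (hA : A.PosDef) :
    (∀ z : Fin d → ℝ, 0 ≤ z ⬝ᵥ A *ᵥ z) ∧
    (∀ a b : Fin d → ℝ, Real.sqrt ((a - b) ⬝ᵥ A *ᵥ (a - b)) ≤
        Real.sqrt (a ⬝ᵥ A *ᵥ a) + Real.sqrt (b ⬝ᵥ A *ᵥ b)) ∧
    (∀ a b : Fin d → ℝ, Real.sqrt (b ⬝ᵥ A *ᵥ b) - Real.sqrt (a ⬝ᵥ A *ᵥ a) ≤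
        Real.sqrt ((a - b) ⬝ᵥ A *ᵥ (a - b))) ∧
    (∃ lam > 0, ∀ z : Fin d → ℝ, lam * (∑ i, z i ^ 2) ≤ z ⬝ᵥ A *ᵥ z) := by
  letI nacg : NormedAddCommGroup (GMMESyn d) := Matrix.toNormedAddCommGroup A hA
  letI ips : InnerProductSpace ℝ (GMMESyn d) := Matrix.toInnerProductSpace A hA.posSemidef
  let toE : (Fin d → ℝ) → GMMESyn d := fun z => z
  have hnorm : ∀ z : Fin d → ℝ, ‖toE z‖ ^ 2 = z ⬝ᵥ A *ᵥ z := by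
    intro z
    rw [← real_inner_self_eq_norm_sq]
    show dotProduct (A *ᵥ z) (star z) = _
    rw [star_trivial, dotProduct_comm]
  have hsq : ∀ z : Fin d → ℝ, Real.sqrt (z ⬝ᵥ A *ᵥ z) = ‖toE z‖ := by
    intro z; rw [← hnorm z, Real.sqrt_sq (norm_nonneg _)]
  have hsub : ∀ a b : Fin d → ℝ, toE (a - b) = toE a - toE b := fun _ _ => rfl
  refine ⟨fun z => by rw [← hnorm z]; positivity, fun a b => ?_, fun a b => ?_, ?_⟩
  · rw [hsq, hsq, hsq, hsub]; exact norm_sub_le _ _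
  · rw [hsq, hsq, hsq, hsub]
    exact (norm_sub_norm_le (toE b) (toE a)).trans_eq (norm_sub_rev _ _)
  · haveI : FiniteDimensional ℝ (GMMESyn d) := by
      have e : (GMMESyn d) ≃ₗ[ℝ] (Fin d → ℝ) := LinearEquiv.refl ℝ (Fin d → ℝ)
      exact Module.Finite.equiv e.symm
    set L : (GMMESyn d) →ₗ[ℝ] EuclideanSpace ℝ (Fin d) :=
      (WithLp.linearEquiv 2 ℝ (Fin d → ℝ)).symm.toLinearMap with hL
    set Lc := LinearMap.toContinuousLinearMap L with hLc
    refine ⟨((‖Lc‖ + 1) ^ 2)⁻¹, by positivity, fun z => ?_⟩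
    have h1 : ‖Lc (toE z)‖ ≤ (‖Lc‖ + 1) * ‖toE z‖ := by
      calc ‖Lc (toE z)‖ ≤ ‖Lc‖ * ‖toE z‖ := Lc.le_opNorm _
      _ ≤ (‖Lc‖ + 1) * ‖toE z‖ := by nlinarith [norm_nonneg (toE z)]
    have h2 : ‖Lc (toE z)‖ ^ 2 = ∑ i, z i ^ 2 := by
      rw [EuclideanSpace.norm_eq, Real.sq_sqrt (by positivity)]
      simp [hLc, hL, Real.norm_eq_abs, sq_abs]
      rfl
    have h3 : ‖Lc (toE z)‖ ^ 2 ≤ (‖Lc‖ + 1) ^ 2 * ‖toE z‖ ^ 2 := by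
      rw [← mul_pow]; exact pow_le_pow_left₀ (norm_nonneg _) h1 2
    rw [h2, hnorm z] at h3
    rw [inv_mul_le_iff₀ (by positivity)]
    linarith

set_option maxHeartbeats 1000000 in
/-- Let `G_K : [0,1]^K → ℝ^d` be measurable and bounded with
`‖G_K(x)‖_Γ ≤ B` on `[0,1]^K`. Then there is a finite constant `C` such that for every
`M > 0` and every choice of nodes `x₁, …, x_M ∈ [0,1]^K`, the Gaussian mixture density
`π_M(y) = (1/M)∑ₘ (2π)^{-d/2} det(Γ)^{-1/2} exp(-½‖G_K(xₘ)-y‖_Γ²)` satisfies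
`∫ π_M(y) log²π_M(y) dy ≤ C`; in particular, the bound is uniform over all cubature node
sets in `[0,1]^K`. -/
theorem gmm_squared_log_moment_uniform_over_nodes {d K : ℕ}
    (Γ : Matrix (Fin d) (Fin d) ℝ) (hΓ_symm : Γ.IsSymm) (hΓ_pd : Γ.PosDef)
    (GK : (Fin K → ℝ) → (Fin d → ℝ)) (hGK_meas : Measurable GK)
    (B : ℝ) (hB : 0 < B)
    (hGK_bdd : ∀ x ∈ Set.Icc (0 : Fin K → ℝ) 1, normGamma Γ (GK x) ≤ B) :
    ∃ C : ℝ, ∀ M : ℕ, 0 < M →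
      ∀ nodes : Fin M → (Fin K → ℝ),
        (∀ m, nodes m ∈ Set.Icc (0 : Fin K → ℝ) 1) →
        ∫ y, ((1 / (M : ℝ)) * ∑ m, (Real.sqrt ((2 * Real.pi) ^ d * Γ.det))⁻¹ *
                Real.exp (-(1 / 2) * normGammaSq Γ (GK (nodes m) - y)))
            * (Real.log ((1 / (M : ℝ)) * ∑ m, (Real.sqrt ((2 * Real.pi) ^ d * Γ.det))⁻¹ *
                Real.exp (-(1 / 2) * normGammaSq Γ (GK (nodes m) - y)))) ^ 2
          ≤ C := by
  obtain ⟨hq0, htri, hrev, lam, hlam, hlamle⟩ := gmm_qfacts hΓ_pd.inv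
  set q : (Fin d → ℝ) → ℝ := normGammaSq Γ with hqdef
  have hq0' : ∀ z, 0 ≤ q z := hq0
  have htri' : ∀ a b : Fin d → ℝ,
      Real.sqrt (q (a - b)) ≤ Real.sqrt (q a) + Real.sqrt (q b) := htri
  have hrev' : ∀ a b : Fin d → ℝ,
      Real.sqrt (q b) - Real.sqrt (q a) ≤ Real.sqrt (q (a - b)) := hrev
  have hlam' : ∀ z : Fin d → ℝ, lam * (∑ i, z i ^ 2) ≤ q z := hlamle
  have hGK_bdd' : ∀ x ∈ Set.Icc (0 : Fin K → ℝ) 1, Real.sqrt (q (GK x)) ≤ B := hGK_bdd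
  set c : ℝ := (Real.sqrt ((2 * Real.pi) ^ d * Γ.det))⁻¹ with hcdef
  have hc : 0 < c := by
    have hdet := hΓ_pd.det_pos
    have h2pi : (0:ℝ) < (2 * Real.pi) ^ d := by positivity
    exact inv_pos.mpr (Real.sqrt_pos.mpr (by positivity))
  set A₀ : ℝ := |Real.log c| + B ^ 2 with hA₀def
  have hA₀ : 0 ≤ A₀ := by positivity
  have hA₀' : |Real.log c| ≤ A₀ := by rw [hA₀def]; nlinarith
  -- the integrable majorant
  set G : (Fin d → ℝ) → ℝ := fun y =>
    c * ((2 * A₀ ^ 2 + 4096) * Real.exp (B ^ 2 / 4)) *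
      ∏ i, Real.exp (-(lam / 32) * (y i) ^ 2) with hGdef
  have hGint : Integrable G := by
    apply Integrable.const_mul
    exact Integrable.fintype_prod (f := fun (_ : Fin d) (x : ℝ) =>
      Real.exp (-(lam / 32) * x ^ 2)) (fun i => integrable_exp_neg_mul_sq
        (div_pos hlam (by norm_num)))
  clear_value q c A₀ G
  clear hq0 htri hrev hlamle
  refine ⟨∫ y, G y, fun M hM nodes hnodes => ?_⟩
  refine integral_mono_of_nonneg (ae_of_all _ fun y => ?_) hGint (ae_of_all _ fun y => ?_)
  · exact mul_nonneg (mul_nonneg (by positivity)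
      (Finset.sum_nonneg fun m _ => mul_nonneg hc.le (Real.exp_nonneg _))) (sq_nonneg _)
  -- notation for this point
  set v : ℝ := q y with hvdef
  have hv : 0 ≤ v := hq0' y
  set rt : ℝ := Real.sqrt v with hrtdef
  set mx : ℝ := max 0 (rt - B) with hmxdef
  have hmx0 : 0 ≤ mx := le_max_left _ _
  set p : ℝ := (1 / (M : ℝ)) * ∑ m, c * Real.exp (-(1 / 2) * q (GK (nodes m) - y))
    with hpdef
  have hMpos : (0:ℝ) < M := by exact_mod_cast hM
  -- bounds on q(G_m) :
  have hGmB : ∀ m : Fin M, Real.sqrt (q (GK (nodes m))) ≤ B := fun m =>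
    hGK_bdd' _ (hnodes m)
  have hGm : ∀ m : Fin M, q (GK (nodes m)) ≤ B ^ 2 := by
    intro m
    have h1 := hGmB m
    have h2 := Real.sq_sqrt (hq0' (GK (nodes m)))
    have h3 := Real.sqrt_nonneg (q (GK (nodes m)))
    nlinarith
  -- upper bound on p
  have hpup : p ≤ c * Real.exp (-(1 / 2) * mx ^ 2) := by
    have hup : ∀ m : Fin M, c * Real.exp (-(1 / 2) * q (GK (nodes m) - y)) ≤
        c * Real.exp (-(1 / 2) * mx ^ 2) := by
      intro m
      have h1 : mx ≤ Real.sqrt (q (GK (nodes m) - y)) := by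
        apply max_le (Real.sqrt_nonneg _)
        have h2 := hrev' (GK (nodes m)) y
        have h3 := hGmB m
        rw [hrtdef, hvdef]
        linarith
      have h2 : mx ^ 2 ≤ q (GK (nodes m) - y) := by
        have h4 := pow_le_pow_left₀ hmx0 h1 2
        rwa [Real.sq_sqrt (hq0' _)] at h4
      exact mul_le_mul_of_nonneg_left (Real.exp_le_exp.mpr (by linarith)) hc.le
    have hsum : ∑ m, c * Real.exp (-(1 / 2) * q (GK (nodes m) - y)) ≤
        (M : ℝ) * (c * Real.exp (-(1 / 2) * mx ^ 2)) := by
      calc ∑ m, c * Real.exp (-(1 / 2) * q (GK (nodes m) - y))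
          ≤ ∑ _m : Fin M, c * Real.exp (-(1 / 2) * mx ^ 2) :=
            Finset.sum_le_sum fun m _ => hup m
        _ = (M : ℝ) * (c * Real.exp (-(1 / 2) * mx ^ 2)) := by
            simp [Finset.sum_const, Finset.card_univ]
    calc p ≤ (1 / (M : ℝ)) * ((M : ℝ) * (c * Real.exp (-(1 / 2) * mx ^ 2))) := by
          exact mul_le_mul_of_nonneg_left hsum (by positivity)
      _ = c * Real.exp (-(1 / 2) * mx ^ 2) := by field_simp
  -- lower bound on p
  have hplow : c * Real.exp (-(B ^ 2 + v)) ≤ p := by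
    have hdn : ∀ m : Fin M, c * Real.exp (-(B ^ 2 + v)) ≤
        c * Real.exp (-(1 / 2) * q (GK (nodes m) - y)) := by
      intro m
      have t := htri' (GK (nodes m)) y
      have s1 := Real.sq_sqrt (hq0' (GK (nodes m) - y))
      have s2 := Real.sq_sqrt (hq0' (GK (nodes m)))
      have s3 := Real.sq_sqrt (hq0' y)
      have n1 := Real.sqrt_nonneg (q (GK (nodes m)))
      have n2 := Real.sqrt_nonneg (q y)
      have hq2 : q (GK (nodes m) - y) ≤ 2 * q (GK (nodes m)) + 2 * q y := by
        nlinarith [sq_nonneg (Real.sqrt (q (GK (nodes m))) - Real.sqrt (q y)),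
          Real.sqrt_nonneg (q (GK (nodes m) - y))]
      have hle : -(B ^ 2 + v) ≤ -(1 / 2) * q (GK (nodes m) - y) := by
        have := hGm m
        rw [hvdef]; nlinarith
      exact mul_le_mul_of_nonneg_left (Real.exp_le_exp.mpr hle) hc.le
    have hsum : (M : ℝ) * (c * Real.exp (-(B ^ 2 + v))) ≤
        ∑ m, c * Real.exp (-(1 / 2) * q (GK (nodes m) - y)) := by
      calc (M : ℝ) * (c * Real.exp (-(B ^ 2 + v)))
          = ∑ _m : Fin M, c * Real.exp (-(B ^ 2 + v)) := by
            simp [Finset.sum_const, Finset.card_univ]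
        _ ≤ ∑ m, c * Real.exp (-(1 / 2) * q (GK (nodes m) - y)) :=
            Finset.sum_le_sum fun m _ => hdn m
    calc c * Real.exp (-(B ^ 2 + v))
        = (1 / (M : ℝ)) * ((M : ℝ) * (c * Real.exp (-(B ^ 2 + v)))) := by field_simp
      _ ≤ p := mul_le_mul_of_nonneg_left hsum (by positivity)
  have hppos : 0 < p := lt_of_lt_of_le (mul_pos hc (Real.exp_pos _)) hplow
  have hpc : p ≤ c := by
    have h1 : Real.exp (-(1 / 2) * mx ^ 2) ≤ 1 := by
      rw [Real.exp_le_one_iff]; nlinarith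
    nlinarith [hpup, hc]
  -- log bounds
  have hlogup : Real.log p ≤ Real.log c := (Real.log_le_log_iff hppos hc).mpr hpc
  have hlogdn : Real.log c - (B ^ 2 + v) ≤ Real.log p := by
    have h := (Real.log_le_log_iff (mul_pos hc (Real.exp_pos _)) hppos).mpr hplow
    rwa [Real.log_mul hc.ne' (Real.exp_ne_zero _), Real.log_exp] at h
  have habs : |Real.log p| ≤ A₀ + v := by
    rw [abs_le]
    have h1 := neg_abs_le (Real.log c)
    have h2 := le_abs_self (Real.log c)
    constructor
    · nlinarith
    · nlinarith
  have hlogsq : (Real.log p) ^ 2 ≤ (A₀ + v) ^ 2 := by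
    rw [← sq_abs]; exact pow_le_pow_left₀ (abs_nonneg _) habs 2
  -- exponential bounds
  have hv32 : (0:ℝ) ≤ v / 32 := div_nonneg hv (by norm_num)
  have e1 : (A₀ + v) ^ 2 ≤ (2 * A₀ ^ 2 + 4096) * Real.exp (v / 32) := by
    have hE1 : (1:ℝ) ≤ Real.exp (v / 32) := Real.one_le_exp hv32
    have hE2 : 1 + v / 32 + (v / 32) ^ 2 / 2 ≤ Real.exp (v / 32) :=
      Real.quadratic_le_exp_of_nonneg hv32
    nlinarith [sq_nonneg (A₀ - v), sq_nonneg A₀]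
  have e2 : v / 16 - B ^ 2 / 4 ≤ (1 / 2) * mx ^ 2 := by
    rcases le_or_gt v (4 * B ^ 2) with h | h
    · nlinarith [sq_nonneg mx]
    · have hrtB : 2 * B ≤ rt := by
        have h1 : Real.sqrt (4 * B ^ 2) ≤ rt := Real.sqrt_le_sqrt h.le
        rwa [show (4 * B ^ 2 : ℝ) = (2 * B) ^ 2 by ring,
          Real.sqrt_sq (by positivity)] at h1
      have hmx : mx = rt - B := max_eq_right (by nlinarith)
      have hrt2 : rt ^ 2 = v := Real.sq_sqrt hv
      rw [hmx]; nlinarith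
  -- final chain
  have hA1 : (0:ℝ) ≤ 2 * A₀ ^ 2 + 4096 := by nlinarith [sq_nonneg A₀]
  have step1 : p * (Real.log p) ^ 2 ≤
      (c * Real.exp (-(1 / 2) * mx ^ 2)) * (A₀ + v) ^ 2 :=
    mul_le_mul hpup hlogsq (sq_nonneg _) (mul_nonneg hc.le (Real.exp_nonneg _))
  have step2 : (c * Real.exp (-(1 / 2) * mx ^ 2)) * (A₀ + v) ^ 2 ≤
      (c * Real.exp (-(1 / 2) * mx ^ 2)) * ((2 * A₀ ^ 2 + 4096) * Real.exp (v / 32)) :=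
    mul_le_mul_of_nonneg_left e1 (mul_nonneg hc.le (Real.exp_nonneg _))
  have step3 : (c * Real.exp (-(1 / 2) * mx ^ 2)) *
        ((2 * A₀ ^ 2 + 4096) * Real.exp (v / 32)) =
      c * (2 * A₀ ^ 2 + 4096) * Real.exp (v / 32 - (1 / 2) * mx ^ 2) := by
    rw [show v / 32 - 1 / 2 * mx ^ 2 = -(1 / 2) * mx ^ 2 + v / 32 by ring, Real.exp_add]
    ring
  have step4 : Real.exp (v / 32 - (1 / 2) * mx ^ 2) ≤
      Real.exp (B ^ 2 / 4 - v / 32) := Real.exp_le_exp.mpr (by linarith)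
  have step5 : Real.exp (B ^ 2 / 4 - v / 32) ≤
      Real.exp (B ^ 2 / 4) * Real.exp (-(lam / 32) * ∑ i, y i ^ 2) := by
    rw [← Real.exp_add]
    apply Real.exp_le_exp.mpr
    have hvle : lam * (∑ i, y i ^ 2) ≤ v := hlam' y
    nlinarith
  have hGy : G y = c * ((2 * A₀ ^ 2 + 4096) * Real.exp (B ^ 2 / 4)) *
      Real.exp (-(lam / 32) * ∑ i, y i ^ 2) := by
    simp only [hGdef]
    rw [← Real.exp_sum, ← Finset.mul_sum]
  calc p * (Real.log p) ^ 2
      ≤ (c * Real.exp (-(1 / 2) * mx ^ 2)) * ((2 * A₀ ^ 2 + 4096) * Real.exp (v / 32)) :=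
        step1.trans step2
    _ = c * (2 * A₀ ^ 2 + 4096) * Real.exp (v / 32 - (1 / 2) * mx ^ 2) := step3
    _ ≤ c * (2 * A₀ ^ 2 + 4096) * Real.exp (B ^ 2 / 4 - v / 32) :=
        mul_le_mul_of_nonneg_left step4 (mul_nonneg hc.le hA1)
    _ ≤ c * (2 * A₀ ^ 2 + 4096) *
          (Real.exp (B ^ 2 / 4) * Real.exp (-(lam / 32) * ∑ i, y i ^ 2)) :=
        mul_le_mul_of_nonneg_left step5 (mul_nonneg hc.le hA1)
    _ = G y := by rw [hGy]; ring
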